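/- Let A be a unital alternative *-algebra over ℂ containing a nontrivial symmetric idempotent e satisfying conditions (♠) and (♣), and let Φ : A → A be a map satisfying the *-Jordan n-derivation identity in the last two slots. Then for every a₁₁ ∈ A₁₁, b₁₂ ∈ A₁₂, c₂₁ ∈ A₂₁, d₂₂ ∈ A₂₂ one has Φ(a₁₁ + b₁₂ + c₂₁) = Φ(a₁₁) + Φ(b₁₂) + Φ(c₂₁) and Φ(b₁₂ + c₂₁ + d₂₂) = Φ(b₁₂) + Φ(c₂₁) + Φ(d₂₂). -/

import Mathlib

/-- The Jordan `•`-product `a • b = ab + b a*`. -/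
def starJordan {A : Type*} [NonAssocRing A] [StarRing A] (a b : A) : A :=
  a * b + b * star a

/-- Left-normed iterated Jordan `•`-product of a list (empty list ↦ 0, junk value). -/
def leftStarJordan {A : Type*} [NonAssocRing A] [StarRing A] : List A → A
  | [] => 0
  | x :: xs => xs.foldl starJordan x

/-- The family `a₁ = ⋯ = a_{n-2} = 1`, `a_{n-1} = x`, `a_n = y`. -/
def lastTwoFamily {A : Type*} [One A] (n : ℕ) (x y : A) : Fin n → A :=
  fun i => if (i : ℕ) = n - 2 then x else if (i : ℕ) = n - 1 then y else 1

/-- `e₁ = e`, `e₂ = 1 - e`. -/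
def peirceIdem {A : Type*} [NonAssocRing A] (e : A) : Fin 2 → A :=
  fun i => if i = 0 then e else 1 - e

/-- Membership in the Peirce component `A_{ij}`: `eᵢ x = x` and `x eⱼ = x`. -/
def inPeirce {A : Type*} [NonAssocRing A] (e : A) (i j : Fin 2) (x : A) : Prop :=
  peirceIdem e i * x = x ∧ x * peirceIdem e j = x

/-- The inner derivation `Ξ_{y,z}(a) = y(za) − z(ya) + y(az) − (ya)z + (az)y − (ay)z`. -/
def innerDer {A : Type*} [NonAssocRing A] (y z a : A) : A :=
  y * (z * a) - z * (y * a) + y * (a * z) - (y * a) * z + (a * z) * y - (a * y) * z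

set_option linter.unusedSectionVars false
set_option linter.unusedVariables false
set_option maxHeartbeats 1000000

section Helpers
variable {A : Type*} [NonAssocRing A] [Module ℂ A] [SMulCommClass ℂ A A]
  [IsScalarTower ℂ A A] [StarRing A]

lemma sjpf_nsmul_mul (k : ℕ) (a b : A) : (k • a) * b = k • (a * b) := by
  rw [← Nat.cast_smul_eq_nsmul ℂ k a, ← Nat.cast_smul_eq_nsmul ℂ k (a * b), smul_mul_assoc]

lemma sjpf_mul_nsmul (k : ℕ) (a b : A) : a * (k • b) = k • (a * b) := by
  rw [← Nat.cast_smul_eq_nsmul ℂ k b, ← Nat.cast_smul_eq_nsmul ℂ k (a * b), mul_smul_comm]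

lemma sjpf_star_nsmul (k : ℕ) (a : A) : star (k • a) = k • (star a) := by
  induction k with
  | zero => simp
  | succ t ih => rw [succ_nsmul, succ_nsmul, star_add, ih]

lemma sj_add_left (a b c : A) : starJordan (a+b) c = starJordan a c + starJordan b c := by
  simp only [starJordan, add_mul, mul_add, star_add]; abel

lemma sj_zero_left (c : A) : starJordan 0 c = 0 := by simp [starJordan]

lemma sj_nsmul_left (k : ℕ) (a b : A) : starJordan (k • a) b = k • starJordan a b := by
  simp only [starJordan, sjpf_nsmul_mul, sjpf_mul_nsmul, sjpf_star_nsmul, smul_add]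

lemma sj_nsmul_right (k : ℕ) (a b : A) : starJordan a (k • b) = k • starJordan a b := by
  simp only [starJordan, sjpf_nsmul_mul, sjpf_mul_nsmul, smul_add]


lemma sj_add_right (a b c : A) : starJordan a (b+c) = starJordan a b + starJordan a c := by
  simp only [starJordan, mul_add, add_mul]; abel

lemma sjpf_cancel {k : ℕ} (hk : k ≠ 0) {z : A} (h : k • z = 0) : z = 0 := by
  have h' : ((k : ℂ)) • z = 0 := by rw [Nat.cast_smul_eq_nsmul]; exact h
  have h2 := congrArg (fun t => ((k:ℂ))⁻¹ • t) h'
  simpa [smul_smul, inv_mul_cancel₀ (show (k:ℂ) ≠ 0 by exact_mod_cast hk)] using h2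

lemma sjpf_cancel_eq {k : ℕ} (hk : k ≠ 0) {z w : A} (h : k • z = k • w) : z = w := by
  have h2 : k • (z - w) = 0 := by rw [smul_sub, h, sub_self]
  exact sub_eq_zero.mp (sjpf_cancel hk h2)

lemma sj_sub_left (a b c : A) : starJordan (a-b) c = starJordan a c - starJordan b c := by
  simp only [starJordan, sub_mul, mul_sub, star_sub]; abel

lemma sj_sub_right (a b c : A) : starJordan a (b-c) = starJordan a b - starJordan a c := by
  simp only [starJordan, mul_sub, sub_mul]; abel

lemma sj_zero_right (c : A) : starJordan c 0 = 0 := by simp [starJordan]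

lemma sj_sum_left {ι : Type*} (t : Finset ι) (f : ι → A) (b : A) :
    starJordan (∑ i ∈ t, f i) b = ∑ i ∈ t, starJordan (f i) b := by
  classical
  induction t using Finset.induction with
  | empty => simp [sj_zero_left]
  | @insert a s h ih => rw [Finset.sum_insert h, Finset.sum_insert h, sj_add_left, ih]

lemma ofFn_update {n : ℕ} (f : Fin n → A) (j : Fin n) (v : A) :
    List.ofFn (Function.update f j v) = (List.ofFn f).set (j : ℕ) v := by
  apply List.ext_getElem
  · simp
  intro i h1 h2
  rw [List.getElem_ofFn, List.getElem_set, List.getElem_ofFn, Function.update_apply]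
  by_cases h : ((⟨i, by simpa using h1⟩ : Fin n) = j)
  · rw [if_pos h, if_pos]
    rw [← h]
  · rw [if_neg h, if_neg]
    intro hc
    exact h (Fin.ext hc.symm)

lemma ofFn_ltf (s : ℕ) (x y : A) :
    List.ofFn (lastTwoFamily (s+2) x y) = List.replicate s (1:A) ++ [x, y] := by
  apply List.ext_getElem
  · simp
  intro i h1 h2
  rw [List.getElem_ofFn, List.getElem_append]
  simp only [lastTwoFamily, List.length_replicate]
  by_cases h : i < s
  · rw [dif_pos h, List.getElem_replicate]
    rw [if_neg (by omega), if_neg (by omega)]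
  · rw [dif_neg h]
    simp only [List.length_ofFn] at h1
    have : i = s ∨ i = s + 1 := by omega
    rcases this with h' | h'
    · subst h'
      rw [if_pos (by omega)]
      simp
    · subst h'
      rw [if_neg (by omega), if_pos (by omega)]
      simp [show s + 1 - s = 1 by omega]

lemma set_append_left (l₁ l₂ : List A) (i : ℕ) (h : i < l₁.length) (v : A) :
    (l₁ ++ l₂).set i v = l₁.set i v ++ l₂ := by
  apply List.ext_getElem
  · simp
  intro j h1 h2
  simp only [List.getElem_set, List.getElem_append, List.length_set]
  split_ifs <;> first | rfl | omega

lemma set_append_right (l₁ l₂ : List A) (i : ℕ) (h : l₁.length ≤ i) (v : A) :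
    (l₁ ++ l₂).set i v = l₁ ++ l₂.set (i - l₁.length) v := by
  apply List.ext_getElem
  · simp
  intro j h1 h2
  simp only [List.getElem_set, List.getElem_append, List.length_set]
  split_ifs <;> first | rfl | omega

lemma lsj_append2 (l : List A) (hl : l ≠ []) (x y : A) :
    leftStarJordan (l ++ [x, y]) = starJordan (starJordan (leftStarJordan l) x) y := by
  obtain ⟨hd, tl, rfl⟩ := List.exists_cons_of_ne_nil hl
  show List.foldl starJordan hd (tl ++ [x, y]) = _
  rw [List.foldl_append]
  rfl

lemma foldl_rep (t : ℕ) : ∀ k : ℕ,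
    List.foldl starJordan ((k : ℕ) • (1:A)) (List.replicate t (1:A)) = ((k * 2^t) • (1:A)) := by
  induction t with
  | zero => intro k; simp
  | succ t ih =>
    intro k
    rw [List.replicate_succ, List.foldl_cons]
    have h1 : starJordan ((k:ℕ) • (1:A)) 1 = ((2*k) • (1:A)) := by
      simp only [starJordan, mul_one, one_mul, sjpf_star_nsmul, star_one]
      rw [two_mul, add_nsmul]
    rw [h1, ih]
    congr 1
    ring

lemma lsj_rep (s : ℕ) (x y : A) :
    leftStarJordan (List.replicate s (1:A) ++ [x, y]) = (2^s) • starJordan x y := by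
  cases s with
  | zero => simpa [leftStarJordan] using rfl
  | succ t =>
    rw [lsj_append2 _ (by simp) x y]
    have h1 : leftStarJordan (List.replicate (t+1) (1:A)) = (2^t) • (1:A) := by
      rw [List.replicate_succ]
      show List.foldl starJordan 1 (List.replicate t 1) = _
      have h := foldl_rep (A := A) t 1
      simpa using h
    rw [h1]
    have h2 : starJordan ((2^t) • (1:A)) x = (2^(t+1)) • x := by
      simp only [starJordan, sjpf_nsmul_mul, sjpf_mul_nsmul, sjpf_star_nsmul, star_one,
        one_mul, mul_one]
      rw [pow_succ, mul_comm (2^t) 2, two_mul, add_nsmul]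
    rw [h2, sj_nsmul_left]

lemma master (s : ℕ) (Φ : A → A)
    (hΦ : ∀ x y : A,
      Φ (leftStarJordan (List.ofFn (lastTwoFamily (s+2) x y))) =
        ∑ k : Fin (s+2), leftStarJordan (List.ofFn
          (Function.update (lastTwoFamily (s+2) x y) k (Φ (lastTwoFamily (s+2) x y k))))) :
    ∃ V : A, ∀ x y : A,
      Φ ((2^s) • starJordan x y) =
        starJordan (starJordan V x) y + (2^s) • starJordan (Φ x) y
          + (2^s) • starJordan x (Φ y) := by
  refine ⟨∑ k : Fin s, leftStarJordan ((List.replicate s (1:A)).set (k:ℕ) (Φ 1)), ?_⟩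
  intro x y
  have h := hΦ x y
  rw [ofFn_ltf, lsj_rep] at h
  rw [h, Fin.sum_univ_castSucc, Fin.sum_univ_castSucc]
  -- the three kinds of terms
  have hmid : ∀ k : Fin s,
      leftStarJordan (List.ofFn (Function.update (lastTwoFamily (s+2) x y)
        (k.castSucc.castSucc) (Φ (lastTwoFamily (s+2) x y k.castSucc.castSucc)))) =
      starJordan (starJordan (leftStarJordan ((List.replicate s (1:A)).set (k:ℕ) (Φ 1))) x) y := by
    intro k
    have hkval : ((k.castSucc.castSucc : Fin (s+2)) : ℕ) = (k : ℕ) := by simp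
    have hfk : lastTwoFamily (s+2) x y k.castSucc.castSucc = 1 := by
      simp only [lastTwoFamily, hkval]
      rw [if_neg (by omega), if_neg (by omega)]
    have hks := k.isLt
    have hne : (List.replicate s (1:A)).set (k:ℕ) (Φ 1) ≠ [] := by
      intro hc
      have hlen : ((List.replicate s (1:A)).set (k:ℕ) (Φ 1)).length = s := by simp
      rw [hc] at hlen
      simp at hlen
      omega
    rw [hfk, ofFn_update, ofFn_ltf, hkval,
      set_append_left _ _ _ (by simpa using k.isLt) (Φ 1),
      lsj_append2 _ hne x y]
  have hxterm :
      leftStarJordan (List.ofFn (Function.update (lastTwoFamily (s+2) x y)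
        ((Fin.last s).castSucc) (Φ (lastTwoFamily (s+2) x y (Fin.last s).castSucc)))) =
      (2^s) • starJordan (Φ x) y := by
    have hkval : (((Fin.last s).castSucc : Fin (s+2)) : ℕ) = s := by simp
    have hfk : lastTwoFamily (s+2) x y (Fin.last s).castSucc = x := by
      simp only [lastTwoFamily, hkval]
      rw [if_pos (by omega)]
    rw [hfk, ofFn_update, ofFn_ltf, hkval,
      set_append_right _ _ _ (by simp) (Φ x)]
    simp only [List.length_replicate, Nat.sub_self]
    show leftStarJordan (List.replicate s 1 ++ [Φ x, y]) = _
    rw [lsj_rep]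
  have hyterm :
      leftStarJordan (List.ofFn (Function.update (lastTwoFamily (s+2) x y)
        (Fin.last (s+1)) (Φ (lastTwoFamily (s+2) x y (Fin.last (s+1)))))) =
      (2^s) • starJordan x (Φ y) := by
    have hkval : ((Fin.last (s+1) : Fin (s+2)) : ℕ) = s + 1 := by simp
    have hfk : lastTwoFamily (s+2) x y (Fin.last (s+1)) = y := by
      simp only [lastTwoFamily, hkval]
      rw [if_neg (by omega), if_pos (by omega)]
    rw [hfk, ofFn_update, ofFn_ltf, hkval,
      set_append_right _ _ _ (by simp) (Φ y)]
    simp only [List.length_replicate, show s + 1 - s = 1 from by omega]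
    show leftStarJordan (List.replicate s 1 ++ [x, Φ y]) = _
    rw [lsj_rep]
  rw [hxterm, hyterm]
  congr 1
  congr 1
  rw [Finset.sum_congr rfl (fun k _ => hmid k), sj_sum_left, ← sj_sum_left]
end Helpers

theorem stmt_4 {A : Type*} [NonAssocRing A] [Module ℂ A]
    [SMulCommClass ℂ A A] [IsScalarTower ℂ A A] [StarRing A]
    (halt₁ : ∀ a b : A, a * a * b = a * (a * b))
    (halt₂ : ∀ a b : A, b * a * a = b * (a * a))
    (e : A) (heStar : star e = e) (heIdem : e * e = e) (he0 : e ≠ 0) (he1 : e ≠ 1)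
    (hsp : ∀ x : A, (∀ r : A, x * r * e = 0) → x = 0)
    (hcl : ∀ x : A, (∀ r : A, x * r * (1 - e) = 0) → x = 0)
    (n : ℕ) (hn : 2 ≤ n) (Φ : A → A)
    (hΦ : ∀ x y : A,
      Φ (leftStarJordan (List.ofFn (lastTwoFamily n x y))) =
        ∑ k : Fin n, leftStarJordan (List.ofFn
          (Function.update (lastTwoFamily n x y) k (Φ (lastTwoFamily n x y k))))) :
    ∀ a b c d : A, inPeirce e 0 0 a → inPeirce e 0 1 b →
      inPeirce e 1 0 c → inPeirce e 1 1 d →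
      Φ (a + b + c) = Φ a + Φ b + Φ c ∧ Φ (b + c + d) = Φ b + Φ c + Φ d := by
  intro a b c d ha hb hc hd
  obtain ⟨s, rfl⟩ : ∃ s, n = s + 2 := ⟨n - 2, by omega⟩
  obtain ⟨V, hM⟩ := master s Φ hΦ
  have hm0 : (2^s : ℕ) ≠ 0 := pow_ne_zero _ two_ne_zero
  have hpe0 : peirceIdem e 0 = e := if_pos rfl
  have hpe1 : peirceIdem e 1 = 1 - e := if_neg (by decide)
  obtain ⟨ha1, ha2⟩ := ha
  obtain ⟨hb1, hb2'⟩ := hb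
  obtain ⟨hc1', hc2⟩ := hc
  obtain ⟨hd1', hd2'⟩ := hd
  rw [hpe0] at ha1 ha2 hb1 hc2
  rw [hpe1] at hb2' hc1' hd1' hd2'
  have hb2 : b * e = 0 := by
    have h' := hb2'; rw [mul_sub, mul_one] at h'; exact sub_eq_self.mp h'
  have hc1 : e * c = 0 := by
    have h' := hc1'; rw [sub_mul, one_mul] at h'; exact sub_eq_self.mp h'
  have hd1 : e * d = 0 := by
    have h' := hd1'; rw [sub_mul, one_mul] at h'; exact sub_eq_self.mp h'
  have hd2 : d * e = 0 := by
    have h' := hd2'; rw [mul_sub, mul_one] at h'; exact sub_eq_self.mp h'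
  have hsa1 : e * star a = star a := by
    have h' := congrArg star ha2; rwa [star_mul, heStar] at h'
  have hsa2 : star a * e = star a := by
    have h' := congrArg star ha1; rwa [star_mul, heStar] at h'
  have hsb1 : star b * e = star b := by
    have h' := congrArg star hb1; rwa [star_mul, heStar] at h'
  have hsb2 : e * star b = 0 := by
    have h' := congrArg star hb2; rwa [star_mul, heStar, star_zero] at h'
  have hsc1 : star c * e = 0 := by
    have h' := congrArg star hc1; rwa [star_mul, heStar, star_zero] at h'
  have hsc2 : e * star c = star c := by
    have h' := congrArg star hc2; rwa [star_mul, heStar] at h'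
  have hsd1 : star d * e = 0 := by
    have h' := congrArg star hd1; rwa [star_mul, heStar, star_zero] at h'
  have hsd2 : e * star d = 0 := by
    have h' := congrArg star hd2; rwa [star_mul, heStar, star_zero] at h'
  have he2star : star (1 - e) = 1 - e := by rw [star_sub, star_one, heStar]
  -- Φ 0 = 0
  have h0 : Φ 0 = 0 := by
    have h := hM 0 0
    simpa [sj_zero_left, sj_zero_right, smul_zero] using h
  -- difference identities
  have Rlem : ∀ x u v w : A,
      (2^s) • starJordan x (Φ (u+v+w) - Φ u - Φ v - Φ w) =
        Φ ((2^s) • starJordan x (u+v+w)) - Φ ((2^s) • starJordan x u)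
          - Φ ((2^s) • starJordan x v) - Φ ((2^s) • starJordan x w) := by
    intro x u v w
    have h1 := hM x (u+v+w)
    have h2 := hM x u
    have h3 := hM x v
    have h4 := hM x w
    rw [h1, h2, h3, h4]
    simp only [sj_add_left, sj_add_right, sj_sub_left, sj_sub_right, smul_add, smul_sub]
    abel
  have Llem : ∀ y u v w : A,
      (2^s) • starJordan (Φ (u+v+w) - Φ u - Φ v - Φ w) y =
        Φ ((2^s) • starJordan (u+v+w) y) - Φ ((2^s) • starJordan u y)
          - Φ ((2^s) • starJordan v y) - Φ ((2^s) • starJordan w y) := by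
    intro y u v w
    have h1 := hM (u+v+w) y
    have h2 := hM u y
    have h3 := hM v y
    have h4 := hM w y
    rw [h1, h2, h3, h4]
    simp only [sj_add_left, sj_add_right, sj_sub_left, sj_sub_right, smul_add, smul_sub]
    abel
  have L2 : ∀ y u v : A,
      (2^s) • starJordan (Φ (u+v) - Φ u - Φ v) y =
        Φ ((2^s) • starJordan (u+v) y) - Φ ((2^s) • starJordan u y)
          - Φ ((2^s) • starJordan v y) := by
    intro y u v
    have h := Llem y u v 0
    rw [add_zero, sj_zero_left, smul_zero, h0, sub_zero, sub_zero] at h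
    exact h
  have R2 : ∀ x u v : A,
      (2^s) • starJordan x (Φ (u+v) - Φ u - Φ v) =
        Φ ((2^s) • starJordan x (u+v)) - Φ ((2^s) • starJordan x u)
          - Φ ((2^s) • starJordan x v) := by
    intro x u v
    have h := Rlem x u v 0
    rw [add_zero, sj_zero_right, smul_zero, h0, sub_zero, sub_zero] at h
    exact h
  -- the element g = e - (1-e)
  set g : A := e - (1 - e) with hgdef
  have hgstar : star g = g := by
    rw [hgdef, star_sub, star_sub, star_one, heStar]
  have grel : ∀ S : A, starJordan g S = 0 → e*S + S*e = S := by
    intro S hgs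
    have h6 : (e*S + S*e) + (e*S + S*e) = S + S := by
      calc (e*S + S*e) + (e*S + S*e)
          = starJordan g S + (S + S) := by
            rw [starJordan, hgstar]
            simp only [hgdef, sub_mul, mul_sub, one_mul, mul_one]
            abel
        _ = S + S := by rw [hgs, zero_add]
    have h7 : (2:ℕ) • (e*S + S*e) = (2:ℕ) • S := by
      rw [two_nsmul, two_nsmul]; exact h6
    exact sjpf_cancel_eq (by norm_num) h7
  -- pair claim
  have key_pair : ∀ p q : A, e*p = p → p*e = 0 → e*star p = 0 → star p*e = star p →
      e*q = 0 → q*e = q → e*star q = star q → star q*e = 0 →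
      Φ (p + q) = Φ p + Φ q := by
    intro p q hp1 hp2 hp3 hp4 hq1 hq2 hq3 hq4
    have jpe : starJordan p e = 0 := by rw [starJordan, hp2, hp3, add_zero]
    have jqe : starJordan q e = q + star q := by rw [starJordan, hq2, hq3]
    have jpe2 : starJordan p (1-e) = p + star p := by
      rw [starJordan, mul_sub, mul_one, hp2, sub_zero, sub_mul, one_mul, hp3, sub_zero]
    have jqe2 : starJordan q (1-e) = 0 := by
      rw [starJordan, mul_sub, mul_one, hq2, sub_self, sub_mul, one_mul, hq3, sub_self, add_zero]
    have jgp : starJordan g p = 0 := by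
      rw [starJordan, hgstar]
      simp only [hgdef, sub_mul, mul_sub, one_mul, mul_one, hp1, hp2]
      abel
    have jgq : starJordan g q = 0 := by
      rw [starJordan, hgstar]
      simp only [hgdef, sub_mul, mul_sub, one_mul, mul_one, hq1, hq2]
      abel
    -- E1 : T ∙ e = 0
    have hL1 := L2 e p q
    rw [sj_add_left, jpe, jqe, zero_add, smul_zero, h0] at hL1
    have E1 : starJordan (Φ (p+q) - Φ p - Φ q) e = 0 :=
      sjpf_cancel hm0 (by rw [hL1]; abel)
    have hL2 := L2 (1-e) p q
    rw [sj_add_left, jpe2, jqe2, add_zero, smul_zero, h0] at hL2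
    have E2 : starJordan (Φ (p+q) - Φ p - Φ q) (1-e) = 0 :=
      sjpf_cancel hm0 (by rw [hL2]; abel)
    have hR := R2 g p q
    rw [sj_add_right, jgp, jgq, add_zero, smul_zero, h0] at hR
    have E3 : starJordan g (Φ (p+q) - Φ p - Φ q) = 0 :=
      sjpf_cancel hm0 (by rw [hR]; abel)
    set T := Φ (p+q) - Φ p - Φ q with hT
    rw [starJordan] at E1 E2
    -- E1 : T*e + e*star T = 0 ; E2 : T*(1-e) + (1-e)*star T = 0
    have hsum : T + star T = 0 := by
      calc T + star T
          = (T*e + e*star T) + (T*(1-e) + (1-e)*star T) := by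
            simp only [mul_sub, mul_one, sub_mul, one_mul]
            abel
        _ = 0 := by rw [E1, E2, add_zero]
    have hstar : star T = -T := by
      have h' := hsum
      rw [add_comm, add_eq_zero_iff_eq_neg] at h'
      exact h'
    have hcomm : T*e = e*T := by
      have h' := E1
      rw [hstar, mul_neg, add_neg_eq_zero] at h'
      exact h'
    have h7 : e*T + T*e = T := grel T E3
    rw [hcomm] at h7
    -- h7 : e*T + e*T = T
    have he2T : e*(e*T) = e*T := by rw [← halt₁ e T, heIdem]
    have h9 : e*T = e*T + e*T := by
      calc e*T = e*(e*T + e*T) := by conv_lhs => rw [← h7]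
        _ = e*(e*T) + e*(e*T) := by rw [mul_add]
        _ = e*T + e*T := by rw [he2T]
    have h10 : e*T = 0 := left_eq_add.mp h9
    have hT0 : T = 0 := by rw [← h7, h10, add_zero]
    have h3 : Φ (p+q) - (Φ p + Φ q) = 0 := by
      calc Φ (p+q) - (Φ p + Φ q) = T := by rw [hT]; abel
        _ = 0 := hT0
    exact sub_eq_zero.mp h3
  -- the pair claim at scaled components
  have pairm : Φ ((2^s)•b + (2^s)•c) = Φ ((2^s)•b) + Φ ((2^s)•c) :=
    key_pair _ _
      (by rw [sjpf_mul_nsmul, hb1])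
      (by rw [sjpf_nsmul_mul, hb2, smul_zero])
      (by rw [sjpf_star_nsmul, sjpf_mul_nsmul, hsb2, smul_zero])
      (by rw [sjpf_star_nsmul, sjpf_nsmul_mul, hsb1])
      (by rw [sjpf_mul_nsmul, hc1, smul_zero])
      (by rw [sjpf_nsmul_mul, hc2])
      (by rw [sjpf_star_nsmul, sjpf_mul_nsmul, hsc2])
      (by rw [sjpf_star_nsmul, sjpf_nsmul_mul, hsc1, smul_zero])
  -- J-values for the components
  have jga : starJordan g a = a + a := by
    rw [starJordan, hgstar]
    simp only [hgdef, sub_mul, mul_sub, one_mul, mul_one, ha1, ha2]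
    abel
  have jgb : starJordan g b = 0 := by
    rw [starJordan, hgstar]
    simp only [hgdef, sub_mul, mul_sub, one_mul, mul_one, hb1, hb2]
    abel
  have jgc : starJordan g c = 0 := by
    rw [starJordan, hgstar]
    simp only [hgdef, sub_mul, mul_sub, one_mul, mul_one, hc1, hc2]
    abel
  have jgd : starJordan g d = -(d + d) := by
    rw [starJordan, hgstar]
    simp only [hgdef, sub_mul, mul_sub, one_mul, mul_one, hd1, hd2]
    abel
  have je2a : starJordan (1-e) a = 0 := by
    rw [starJordan, he2star]
    simp only [sub_mul, mul_sub, one_mul, mul_one, ha1, ha2]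
    abel
  have je2b : starJordan (1-e) b = b := by
    rw [starJordan, he2star]
    simp only [sub_mul, mul_sub, one_mul, mul_one, hb1, hb2]
    abel
  have je2c : starJordan (1-e) c = c := by
    rw [starJordan, he2star]
    simp only [sub_mul, mul_sub, one_mul, mul_one, hc1, hc2]
    abel
  have jeb : starJordan e b = b := by rw [starJordan, heStar, hb1, hb2, add_zero]
  have jec : starJordan e c = c := by rw [starJordan, heStar, hc1, hc2, zero_add]
  have jed : starJordan e d = 0 := by rw [starJordan, heStar, hd1, hd2, add_zero]
  constructor
  · -- claim 1 : Φ (a+b+c) = Φ a + Φ b + Φ c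
    have hRg := Rlem g a b c
    rw [sj_add_right, sj_add_right, jga, jgb, jgc, add_zero, add_zero,
      smul_zero, h0] at hRg
    have F1 : starJordan g (Φ (a+b+c) - Φ a - Φ b - Φ c) = 0 :=
      sjpf_cancel hm0 (by rw [hRg]; abel)
    have hRe2 := Rlem (1-e) a b c
    rw [sj_add_right, sj_add_right, je2a, je2b, je2c, zero_add, smul_zero, h0,
      smul_add, pairm] at hRe2
    have F2 : starJordan (1-e) (Φ (a+b+c) - Φ a - Φ b - Φ c) = 0 :=
      sjpf_cancel hm0 (by rw [hRe2]; abel)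
    set S := Φ (a+b+c) - Φ a - Φ b - Φ c with hS
    have h1 : (1-e)*S + S*(1-e) = 0 := by
      have h' := F2
      rw [starJordan, he2star] at h'
      exact h'
    have h2 : e*S + S*e = S := grel S F1
    have hfin : S = 0 := by
      calc S = ((1-e)*S + S*(1-e)) + ((e*S + S*e) - S) := by
            simp only [sub_mul, mul_sub, one_mul, mul_one]
            abel
        _ = 0 := by rw [h1, h2, sub_self, add_zero]
    have h3 : Φ (a+b+c) - (Φ a + Φ b + Φ c) = 0 := by
      calc Φ (a+b+c) - (Φ a + Φ b + Φ c) = S := by rw [hS]; abel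
        _ = 0 := hfin
    exact sub_eq_zero.mp h3
  · -- claim 2 : Φ (b+c+d) = Φ b + Φ c + Φ d
    have hRg := Rlem g b c d
    rw [sj_add_right, sj_add_right, jgb, jgc, jgd, zero_add, zero_add,
      smul_zero, h0] at hRg
    have G1 : starJordan g (Φ (b+c+d) - Φ b - Φ c - Φ d) = 0 :=
      sjpf_cancel hm0 (by rw [hRg]; abel)
    have hRe := Rlem e b c d
    rw [sj_add_right, sj_add_right, jeb, jec, jed, add_zero, smul_zero, h0,
      smul_add, pairm] at hRe
    have G2 : starJordan e (Φ (b+c+d) - Φ b - Φ c - Φ d) = 0 :=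
      sjpf_cancel hm0 (by rw [hRe]; abel)
    set S := Φ (b+c+d) - Φ b - Φ c - Φ d with hS
    have h2 : e*S + S*e = S := grel S G1
    have h1 : e*S + S*e = 0 := by
      have h' := G2
      rw [starJordan, heStar] at h'
      exact h'
    have hfin : S = 0 := by rw [← h2, h1]
    have h3 : Φ (b+c+d) - (Φ b + Φ c + Φ d) = 0 := by
      calc Φ (b+c+d) - (Φ b + Φ c + Φ d) = S := by rw [hS]; abel
        _ = 0 := hfin
    exact sub_eq_zero.mp h3
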